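/- Let A be a symmetric positive definite real m×m matrix, W an invertible n×n matrix, B an n×m matrix, F : [0,T] → ℝⁿ continuous, and C₀ ∈ ℝⁿ. Then there exists a unique continuously differentiable function C : [0,T] → ℝⁿ and a unique continuous function R : [0,T] → ℝᵐ satisfying W C'(t) + B R(t) = F(t), −Bᵀ C(t) + A R(t) = 0 for all t ∈ [0,T], and C(0) = C₀. -/

import Mathlib

open Set Matrix

/-- Well-posedness of the finite-dimensional differential-algebraic Galerkin system:
`W C' + B R = F`, `-Bᵀ C + A R = 0`, `C 0 = C₀`, with `A` symmetric positive definite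
and `W` invertible, `F` continuous on `[0,T]`. There is a unique continuously
differentiable `C` and unique continuous `R` on `[0,T]` solving the system. -/
theorem stmt0 (n m : ℕ) (T : ℝ) (hT : 0 < T)
    (A : Matrix (Fin m) (Fin m) ℝ) (hA : A.PosDef)
    (W : Matrix (Fin n) (Fin n) ℝ) (hW : IsUnit W)
    (B : Matrix (Fin n) (Fin m) ℝ)
    (F : ℝ → (Fin n → ℝ)) (hF : ContinuousOn F (Icc 0 T))
    (C₀ : Fin n → ℝ) :
    ∃ (C D : ℝ → (Fin n → ℝ)) (R : ℝ → (Fin m → ℝ)),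
      ContinuousOn D (Icc 0 T) ∧ ContinuousOn R (Icc 0 T) ∧
      (∀ t ∈ Icc 0 T, HasDerivAt C (D t) t) ∧
      (∀ t ∈ Icc 0 T, W.mulVec (D t) + B.mulVec (R t) = F t) ∧
      (∀ t ∈ Icc 0 T, -(Bᵀ.mulVec (C t)) + A.mulVec (R t) = 0) ∧
      C 0 = C₀ ∧
      (∀ (C₁ D₁ : ℝ → (Fin n → ℝ)) (R₁ : ℝ → (Fin m → ℝ)),
        ContinuousOn D₁ (Icc 0 T) → ContinuousOn R₁ (Icc 0 T) →
        (∀ t ∈ Icc 0 T, HasDerivAt C₁ (D₁ t) t) →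
        (∀ t ∈ Icc 0 T, W.mulVec (D₁ t) + B.mulVec (R₁ t) = F t) →
        (∀ t ∈ Icc 0 T, -(Bᵀ.mulVec (C₁ t)) + A.mulVec (R₁ t) = 0) →
        C₁ 0 = C₀ →
        ∀ t ∈ Icc 0 T, C₁ t = C t ∧ R₁ t = R t) := by
  classical
  -- invertibility facts
  have hAdet : IsUnit A.det := isUnit_iff_ne_zero.mpr hA.det_pos.ne'
  have hWdet : IsUnit W.det := (Matrix.isUnit_iff_isUnit_det W).mp hW
  have hAAi : A * A⁻¹ = 1 := Matrix.mul_nonsing_inv A hAdet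
  have hAiA : A⁻¹ * A = 1 := Matrix.nonsing_inv_mul A hAdet
  have hWWi : W * W⁻¹ = 1 := Matrix.mul_nonsing_inv W hWdet
  -- continuous extension of F to ℝ
  set G : ℝ → (Fin n → ℝ) := fun t => F (max 0 (min t T)) with hGdef
  have hmem : ∀ t : ℝ, max 0 (min t T) ∈ Icc 0 T := fun t =>
    ⟨le_max_left _ _, max_le hT.le (min_le_right t T)⟩
  have hG : Continuous G := hF.comp_continuous (by fun_prop) hmem
  have hGF : ∀ t ∈ Icc 0 T, G t = F t := by
    intro t ht
    simp only [hGdef, min_eq_left ht.2, max_eq_right ht.1]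
  -- the matrices and operators
  set X : Matrix (Fin n) (Fin n) ℝ := B * (A⁻¹ * Bᵀ) with hXdef
  set Mmat : Matrix (Fin n) (Fin n) ℝ := -(W⁻¹ * X) with hMdef
  set M : (Fin n → ℝ) →L[ℝ] (Fin n → ℝ) :=
    LinearMap.toContinuousLinearMap (Matrix.mulVecLin Mmat) with hM
  have hMapp : ∀ x, M x = Mmat.mulVec x := fun x => rfl
  set Wic : (Fin n → ℝ) →L[ℝ] (Fin n → ℝ) :=
    LinearMap.toContinuousLinearMap (Matrix.mulVecLin W⁻¹) with hWic
  set g : ℝ → (Fin n → ℝ) := fun t => Wic (G t) with hgdef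
  have hgapp : ∀ t, g t = W⁻¹.mulVec (G t) := fun t => rfl
  have hg : Continuous g := Wic.continuous.comp hG
  -- matrix exponential
  set E : ℝ → ((Fin n → ℝ) →L[ℝ] (Fin n → ℝ)) :=
    fun t => NormedSpace.exp (t • M) with hEdef
  letI : NormedAlgebra ℚ ((Fin n → ℝ) →L[ℝ] (Fin n → ℝ)) := NormedAlgebra.restrictScalars ℚ ℝ _
  have hEcont : Continuous E :=
    NormedSpace.exp_continuous.comp (continuous_id.smul continuous_const)
  have hE0 : E 0 = 1 := by simp [hEdef, NormedSpace.exp_zero]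
  have hEinv : ∀ t (w : Fin n → ℝ), E t (E (-t) w) = w := by
    intro t w
    have hc : Commute (t • M) ((-t) • M) :=
      ((Commute.refl M).smul_left t).smul_right (-t)
    have : E t * E (-t) = 1 := by
      rw [hEdef]
      rw [← NormedSpace.exp_add_of_commute hc]
      simp [← add_smul, NormedSpace.exp_zero]
    calc E t (E (-t) w) = (E t * E (-t)) w := rfl
    _ = w := by rw [this]; rfl
  -- the integral term
  set I : ℝ → (Fin n → ℝ) := fun t => ∫ s in (0:ℝ)..t, E (-s) (g s) with hIdef
  have hint : Continuous fun s => E (-s) (g s) :=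
    (hEcont.comp continuous_neg).clm_apply hg
  have hI : ∀ t, HasDerivAt I (E (-t) (g t)) t := fun t =>
    (hint.integral_hasStrictDerivAt 0 t).hasDerivAt
  -- the solution
  set C : ℝ → (Fin n → ℝ) := fun t => E t (C₀ + I t) with hCdef
  have hC' : ∀ t, HasDerivAt C (M (C t) + g t) t := by
    intro t
    have hEt : HasDerivAt E (M * E t) t := by
      simpa [hEdef] using hasDerivAt_exp_smul_const' (𝕂 := ℝ) M t
    have hy : HasDerivAt (fun u => C₀ + I u) (E (-t) (g t)) t :=
      (hI t).const_add C₀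
    have := hEt.clm_apply hy
    simpa [ContinuousLinearMap.mul_apply, hEinv, hCdef] using this
  have hCcont : Continuous C := by
    rw [continuous_iff_continuousAt]
    exact fun t => (hC' t).continuousAt
  set D : ℝ → (Fin n → ℝ) := fun t => M (C t) + g t with hDdef
  have hDcont : Continuous D := (M.continuous.comp hCcont).add hg
  set R : ℝ → (Fin m → ℝ) := fun t => (A⁻¹ * Bᵀ).mulVec (C t) with hRdef
  have hRcont : Continuous R := by
    exact (LinearMap.toContinuousLinearMap (Matrix.mulVecLin (A⁻¹ * Bᵀ))).continuous.comp hCcont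
  refine ⟨C, D, R, hDcont.continuousOn, hRcont.continuousOn, fun t _ => hC' t, ?_, ?_, ?_, ?_⟩
  · -- first equation
    intro t ht
    have h1 : W * Mmat = -X := by
      rw [hMdef, Matrix.mul_neg, ← Matrix.mul_assoc, hWWi, Matrix.one_mul]
    calc W.mulVec (D t) + B.mulVec (R t)
        = (W * Mmat).mulVec (C t) + (W * W⁻¹).mulVec (G t) + X.mulVec (C t) := by
          simp [hDdef, hRdef, hMapp, hgapp, Matrix.mulVec_add, Matrix.mulVec_mulVec, hXdef]
      _ = F t := by
          rw [h1, hWWi, Matrix.neg_mulVec, Matrix.one_mulVec, hGF t ht]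
          abel
  · -- second equation
    intro t ht
    have : A * (A⁻¹ * Bᵀ) = Bᵀ := by rw [← Matrix.mul_assoc, hAAi, Matrix.one_mul]
    simp [hRdef, Matrix.mulVec_mulVec, this]
  · -- initial condition
    simp [hCdef, hE0, hIdef]
  · -- uniqueness
    intro C₁ D₁ R₁ hD₁c hR₁c hd1 he1 he2 hinit
    -- R₁ determined by C₁
    have hR1 : ∀ t ∈ Icc 0 T, R₁ t = (A⁻¹ * Bᵀ).mulVec (C₁ t) := by
      intro t ht
      have h := he2 t ht
      have h' : A.mulVec (R₁ t) = Bᵀ.mulVec (C₁ t) := by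
        have h2 := congrArg (fun v => Bᵀ.mulVec (C₁ t) + v) h
        have h3 : Bᵀ.mulVec (C₁ t) = A.mulVec (R₁ t) := by
          simpa [← add_assoc] using h2.symm
        exact h3.symm
      calc R₁ t = (A⁻¹ * A).mulVec (R₁ t) := by rw [hAiA, Matrix.one_mulVec]
        _ = A⁻¹.mulVec (A.mulVec (R₁ t)) := by rw [← Matrix.mulVec_mulVec]
        _ = A⁻¹.mulVec (Bᵀ.mulVec (C₁ t)) := by rw [h']
        _ = (A⁻¹ * Bᵀ).mulVec (C₁ t) := by rw [Matrix.mulVec_mulVec]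
    -- D₁ determined by C₁
    have hD1 : ∀ t ∈ Icc 0 T, D₁ t = M (C₁ t) + g t := by
      intro t ht
      have h := he1 t ht
      have h' : W.mulVec (D₁ t) = F t - X.mulVec (C₁ t) := by
        rw [hR1 t ht] at h
        rw [eq_sub_iff_add_eq, ← h, hXdef, ← Matrix.mulVec_mulVec]
      calc D₁ t = (W⁻¹ * W).mulVec (D₁ t) := by
            rw [Matrix.nonsing_inv_mul W hWdet, Matrix.one_mulVec]
        _ = W⁻¹.mulVec (W.mulVec (D₁ t)) := by rw [← Matrix.mulVec_mulVec]
        _ = W⁻¹.mulVec (F t) - (W⁻¹ * X).mulVec (C₁ t) := by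
            rw [h', Matrix.mulVec_sub, Matrix.mulVec_mulVec]
        _ = M (C₁ t) + g t := by
            rw [hMapp, hgapp, hMdef, Matrix.neg_mulVec, hGF t ht]
            abel
    -- uniqueness of the ODE
    have hCeq : EqOn C₁ C (Icc 0 T) := by
      have hv : ∀ t : ℝ, LipschitzWith ‖M‖₊ (fun x => M x + g t) := by
        intro t
        apply LipschitzWith.of_dist_le_mul
        intro x y
        rw [dist_add_right]
        exact M.lipschitz.dist_le_mul x y
      refine ODE_solution_unique (v := fun t x => M x + g t) hv
        (fun t ht => (hd1 t ht).continuousAt.continuousWithinAt)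
        (fun t ht => ?_) hCcont.continuousOn (fun t ht => ?_) (by rw [hinit]; simp [hCdef, hE0, hIdef])
      · have := hd1 t (Ico_subset_Icc_self ht)
        rw [hD1 t (Ico_subset_Icc_self ht)] at this
        exact this.hasDerivWithinAt
      · exact (hC' t).hasDerivWithinAt
    intro t ht
    refine ⟨hCeq ht, ?_⟩
    rw [hR1 t ht, hCeq ht]
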